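/- With welfare regret R_T = ∑_{t=1}^T (V(ω*) − V(ω_t)), agent-sum regret S_T = ∑_{i=1}^n ∑_{t=1}^T (u_i* − u_{i,t}), and seller regret R₀_T defined relative to the VCG utilities, and W_T = (1/T)∑_{i=1}^n ∑_{t=1}^T (p_{i,t} + V_{−i}(ω_t)) − ∑_{i=1}^n V_{−i}(ω*_{−i}), we have S_T = n·R_T + T·W_T and R₀_T = −(n−1)·R_T − T·W_T. -/

import Mathlib

/-- Decomposition of agent-sum regret and seller regret in terms of the welfare regret
`R_T` and the price-estimation term `W_T`. -/
theorem regret_decomposition {Ω : Type*} (n T : ℕ) (hT : 0 < T)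
    (v0 : Ω → ℝ) (v : Fin n → Ω → ℝ)
    (ωstar : Ω) (ωmi : Fin n → Ω) (ωt : Fin T → Ω) (p : Fin n → Fin T → ℝ) :
    let V : Ω → ℝ := fun ω => v0 ω + ∑ i, v i ω
    let Vmi : Fin n → Ω → ℝ := fun i ω => v0 ω + ∑ j ∈ Finset.univ.erase i, v j ω
    let RT : ℝ := ∑ t, (V ωstar - V (ωt t))
    let uistar : Fin n → ℝ := fun i => V ωstar - Vmi i (ωmi i)
    let uit : Fin n → Fin T → ℝ := fun i t => v i (ωt t) - p i t
    let ST : ℝ := ∑ i, ∑ t, (uistar i - uit i t)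
    let u0star : ℝ := ∑ i, Vmi i (ωmi i) - ((n : ℝ) - 1) * V ωstar
    let u0t : Fin T → ℝ := fun t => v0 (ωt t) + ∑ i, p i t
    let R0T : ℝ := ∑ t, (u0star - u0t t)
    let WT : ℝ := (1 / (T : ℝ)) * ∑ i, ∑ t, (p i t + Vmi i (ωt t)) - ∑ i, Vmi i (ωmi i)
    ST = (n : ℝ) * RT + (T : ℝ) * WT ∧ R0T = -((n : ℝ) - 1) * RT - (T : ℝ) * WT := by
  intro V Vmi RT uistar uit ST u0star u0t R0T WT
  have hT' : (T:ℝ) ≠ 0 := by positivity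
  have hVmi : ∀ i ω, Vmi i ω = V ω - v i ω := by
    intro i ω
    simp only [V, Vmi, Finset.sum_erase_eq_sub (Finset.mem_univ i)]
    ring
  set A : ℝ := ∑ i, ∑ t, (p i t + Vmi i (ωt t)) with hA
  set B : ℝ := ∑ i, Vmi i (ωmi i) with hB
  have hWT : WT = (1 / (T : ℝ)) * A - B := rfl
  constructor
  · have key : ∀ i t, uistar i - uit i t =
        (V ωstar - V (ωt t)) + ((p i t + Vmi i (ωt t)) - Vmi i (ωmi i)) := by
      intro i t
      simp only [uistar, uit, hVmi]
      ring
    have : ST = ∑ i : Fin n, (RT + (∑ t, (p i t + Vmi i (ωt t)) - (T : ℝ) * Vmi i (ωmi i))) := by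
      simp only [ST]
      refine Finset.sum_congr rfl fun i _ => ?_
      rw [Finset.sum_congr rfl fun t _ => key i t]
      simp only [RT, Finset.sum_add_distrib, Finset.sum_sub_distrib, Finset.sum_const,
        Finset.card_univ, Fintype.card_fin, nsmul_eq_mul]
    rw [this, Finset.sum_add_distrib, Finset.sum_sub_distrib, Finset.sum_const,
      Finset.card_univ, Fintype.card_fin, nsmul_eq_mul, ← Finset.mul_sum, ← hA, ← hB, hWT]
    field_simp
  · have key : ∀ t, u0star - u0t t =
        -((n:ℝ) - 1) * (V ωstar - V (ωt t)) + (B - ∑ i, (p i t + Vmi i (ωt t))) := by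
      intro t
      simp only [u0star, u0t, hB, hVmi, V, Finset.sum_add_distrib, Finset.sum_sub_distrib,
        Finset.sum_const, Finset.card_univ, Fintype.card_fin, nsmul_eq_mul]
      ring
    have hcomm : ∑ t : Fin T, ∑ i : Fin n, (p i t + Vmi i (ωt t)) = A := Finset.sum_comm
    have : R0T = ∑ t, (-((n:ℝ) - 1) * (V ωstar - V (ωt t)) + (B - ∑ i, (p i t + Vmi i (ωt t)))) := 
      Finset.sum_congr rfl fun t _ => key t
    rw [this, Finset.sum_add_distrib, Finset.sum_sub_distrib, Finset.sum_const,
      Finset.card_univ, Fintype.card_fin, nsmul_eq_mul, hcomm, ← Finset.mul_sum, hWT]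
    show -((n:ℝ) - 1) * RT + ((T:ℝ) * B - A) = _
    field_simp
    ring
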